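/- If a history H' is equivalent to H and ≺_{H'} = ≺_H, then writing H = I_1 R_1 I_2 R_2 ... as maximal alternating blocks of invocations and responses, H' = I'_1 R'_1 I'_2 R'_2 ... where each I'_x is a permutation of I_x and each R'_x is a permutation of R_x. -/

import Mathlib

namespace RV

inductive Event where
  | inv (p : ℕ) (op : ℕ)
  | res (p : ℕ) (op : ℕ)
deriving DecidableEq

abbrev History := List Event

def Event.proc : Event → ℕ
  | .inv p _ => p
  | .res p _ => p

def Event.op : Event → ℕ
  | .inv _ o => o
  | .res _ o => o

def Event.isInv : Event → Bool
  | .inv _ _ => true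
  | .res _ _ => false

/-- The subsequence of events of process `p`. -/
def proj (E : History) (p : ℕ) : History := E.filter (fun e => e.proc == p)

/-- Two histories are equivalent if every process has the same subsequence of events. -/
def Equivalent (E F : History) : Prop := ∀ p, proj E p = proj F p

/-- Operation `a` precedes operation `b` in `E`: the response of `a` occurs
before the invocation of `b`. -/
def prec (E : History) (a b : ℕ) : Prop :=
  ∃ i j p q, i < j ∧ E[(i : ℕ)]? = some (Event.res p a) ∧ E[(j : ℕ)]? = some (Event.inv q b)

/-- A single process' subsequence alternates invocation, matching response, ... ,
possibly ending with a pending invocation. -/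
inductive Alt : History → Prop where
  | nil : Alt []
  | pend (p o : ℕ) : Alt [Event.inv p o]
  | step (p o : ℕ) (l : History) : Alt l → Alt (Event.inv p o :: Event.res p o :: l)

/-- Well-formed history: per-process alternation, and every operation identifier is
invoked at most once and responded at most once. -/
def WellFormed (E : History) : Prop :=
  (∀ p, Alt (proj E p)) ∧
  (∀ o, E.countP (fun e => e.isInv && e.op == o) ≤ 1) ∧
  (∀ o, E.countP (fun e => !e.isInv && e.op == o) ≤ 1)

def CompleteIn (E : History) (o : ℕ) : Prop :=
  (∃ p, Event.inv p o ∈ E) ∧ ∃ q, Event.res q o ∈ E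

def PendingIn (E : History) (o : ℕ) : Prop :=
  (∃ p, Event.inv p o ∈ E) ∧ ∀ q, Event.res q o ∉ E

def hasRes (E : History) (o : ℕ) : Bool := E.any (fun e => !e.isInv && e.op == o)

/-- `comp E` removes the invocations of pending operations. -/
def comp (E : History) : History := E.filter (fun e => !e.isInv || hasRes E e.op)

/-- `E'` extends `E` by appending responses to some pending operations. -/
def IsExtension (E E' : History) : Prop :=
  ∃ rs : History, E' = E ++ rs ∧
    (∀ e ∈ rs, e.isInv = false ∧ PendingIn E e.op ∧ Event.inv e.proc e.op ∈ E) ∧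
    rs.Pairwise (fun a b => a.op ≠ b.op)

/-- Sequential histories: alternating invocation/matching-response pairs. -/
inductive Seq : History → Prop where
  | nil : Seq []
  | step (p o : ℕ) (l : History) : Seq l → Seq (Event.inv p o :: Event.res p o :: l)

/-- `E` is linearizable w.r.t. the sequential object `O` (a set of sequential
histories): there is an extension `E'` of `E` and `S ∈ O` such that `comp E'`
and `S` are equivalent and `<_{comp E'} ⊆ <_S`. -/
def Linearizable (O : Set History) (E : History) : Prop :=
  ∃ E', IsExtension E E' ∧ ∃ S ∈ O, Equivalent (comp E') S ∧
    ∀ a b, prec (comp E') a b → prec S a b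

/-- `E` is similar to `F`: some history `E'`, obtained from `E` by appending
responses to some pending operations and removing the invocations of some other
pending operations, is equivalent to `F` and satisfies `≺_{E'} ⊆ ≺_F`. -/
def Similar (E F : History) : Prop :=
  ∃ (keep : Event → Bool) (rs : History),
    (∀ e ∈ E, keep e = false → e.isInv = true ∧ PendingIn E e.op) ∧
    (∀ e ∈ rs, e.isInv = false ∧ PendingIn E e.op ∧ Event.inv e.proc e.op ∈ E ∧
      keep (Event.inv e.proc e.op) = true) ∧
    rs.Pairwise (fun a b => a.op ≠ b.op) ∧
    Equivalent (E.filter keep ++ rs) F ∧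
    (∀ a b, prec (E.filter keep ++ rs) a b → prec F a b)

/-- The class `GenLin`: sets of well-formed histories closed under prefixes and
under similarity. -/
def GenLin (O : Set History) : Prop :=
  (∀ F ∈ O, ∀ E : History, E <+: F → E ∈ O) ∧
  (∀ F ∈ O, ∀ E : History, Similar E F → E ∈ O)


/-- `bs` is a decomposition into maximal alternating nonempty blocks, starting with
a block of invocations: even-indexed blocks contain only invocations, odd-indexed
blocks only responses. -/
def AltBlocks (bs : List History) : Prop :=
  (∀ b ∈ bs, b ≠ []) ∧
  ∀ k, k < bs.length → ∀ e ∈ bs.getD k [], e.isInv = (k % 2 == 0)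

section Aux

lemma event_eq_res (e : Event) (h : e.isInv = false) : e = Event.res e.proc e.op := by
  cases e <;> simp_all [Event.isInv, Event.proc, Event.op]

lemma event_eq_inv (e : Event) (h : e.isInv = true) : e = Event.inv e.proc e.op := by
  cases e <;> simp_all [Event.isInv, Event.proc, Event.op]

lemma proj_append (A B : History) (p : ℕ) : proj (A ++ B) p = proj A p ++ proj B p :=
  List.filter_append _ _

lemma mem_proj_self {e : Event} {T : History} : e ∈ proj T e.proc ↔ e ∈ T := by
  simp [proj]

lemma mem_of_equiv {T T' : History} (h : Equivalent T T') {e : Event} (he : e ∈ T) : e ∈ T' := by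
  have h1 : e ∈ proj T e.proc := mem_proj_self.2 he
  rw [h e.proc] at h1
  exact mem_proj_self.1 h1

lemma equiv_perm {T T' : History} (h : Equivalent T T') : T.Perm T' := by
  rw [List.perm_iff_count]
  intro e
  have h1 : List.count e T = List.count e (proj T e.proc) :=
    (List.count_filter (by simp)).symm
  have h2 : List.count e T' = List.count e (proj T' e.proc) :=
    (List.count_filter (by simp)).symm
  rw [h1, h2, h e.proc]

lemma two_le_countP {α : Type} {pred : α → Bool} :
    ∀ {T : List α} {i j : ℕ} {x y : α}, i < j → T[i]? = some x → T[j]? = some y →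
      pred x = true → pred y = true → 2 ≤ T.countP pred := by
  intro T
  induction T with
  | nil => intro i j x y hij hi hj px py; simp at hi
  | cons t ts ih =>
    intro i j x y hij hi hj px py
    cases i with
    | zero =>
      rw [List.getElem?_cons_zero] at hi
      have hx := Option.some.inj hi
      subst hx
      cases j with
      | zero => omega
      | succ j' =>
        rw [List.getElem?_cons_succ] at hj
        have hy : 0 < ts.countP pred := List.countP_pos_iff.2 ⟨y, List.mem_of_getElem? hj, py⟩
        rw [List.countP_cons, if_pos px]
        omega
    | succ i' =>
      cases j with
      | zero => omega
      | succ j' =>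
        rw [List.getElem?_cons_succ] at hi hj
        have h2 := ih (show i' < j' by omega) hi hj px py
        rw [List.countP_cons]
        omega

lemma index_unique {α : Type} {pred : α → Bool} {T : List α} (hc : T.countP pred ≤ 1)
    {i j : ℕ} {x y : α}
    (hi : T[i]? = some x) (hj : T[j]? = some y)
    (px : pred x = true) (py : pred y = true) :
    i = j ∧ x = y := by
  rcases lt_trichotomy i j with h | h | h
  · exact absurd (two_le_countP h hi hj px py) (by omega)
  · subst h
    rw [hi] at hj
    exact ⟨rfl, Option.some.inj hj⟩
  · exact absurd (two_le_countP h hj hi py px) (by omega)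

lemma mem_takeWhile_iff_index {α : Type} {K : α → Bool} :
    ∀ {T : List α} {e : α}, e ∈ T.takeWhile K ↔
      (K e = true ∧ ∃ n, T[(n : ℕ)]? = some e ∧
        ∀ m x, m < n → T[(m : ℕ)]? = some x → K x = true) := by
  intro T
  induction T with
  | nil => intro e; simp [List.takeWhile]
  | cons t ts ih =>
    intro e
    constructor
    · intro he
      by_cases hK : K t = true
      · rw [List.takeWhile_cons_of_pos hK] at he
        rcases List.mem_cons.1 he with rfl | he'
        · exact ⟨hK, 0, List.getElem?_cons_zero, fun m x hm => by omega⟩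
        · rcases ih.1 he' with ⟨hKe, n, hn, hall⟩
          refine ⟨hKe, n + 1, by rw [List.getElem?_cons_succ]; exact hn, ?_⟩
          intro m x hm hx
          cases m with
          | zero =>
            rw [List.getElem?_cons_zero] at hx
            rw [← Option.some.inj hx]
            exact hK
          | succ m' =>
            rw [List.getElem?_cons_succ] at hx
            exact hall m' x (by omega) hx
      · rw [List.takeWhile_cons_of_neg hK] at he
        simp at he
    · rintro ⟨hKe, n, hn, hall⟩
      cases n with
      | zero =>
        rw [List.getElem?_cons_zero] at hn
        have := Option.some.inj hn
        subst this
        rw [List.takeWhile_cons_of_pos hKe]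
        exact List.mem_cons_self
      | succ n' =>
        have hKt : K t = true := hall 0 t (by omega) List.getElem?_cons_zero
        rw [List.takeWhile_cons_of_pos hKt]
        refine List.mem_cons_of_mem _ (ih.2 ⟨hKe, n', ?_, ?_⟩)
        · rw [List.getElem?_cons_succ] at hn; exact hn
        · intro m x hm hx
          exact hall (m + 1) x (by omega) (by rw [List.getElem?_cons_succ]; exact hx)

lemma count_event_le {T : History}
    (hc1 : ∀ o, T.countP (fun e => e.isInv && e.op == o) ≤ 1)
    (hc2 : ∀ o, T.countP (fun e => !e.isInv && e.op == o) ≤ 1) (e : Event) :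
    T.count e ≤ 1 := by
  rw [List.count_eq_countP]
  cases he : e.isInv
  · refine le_trans (List.countP_mono_left (q := fun x => !x.isInv && x.op == e.op) ?_) (hc2 e.op)
    intro x hx h
    rw [beq_iff_eq] at h
    subst h
    simp [he]
  · refine le_trans (List.countP_mono_left (q := fun x => x.isInv && x.op == e.op) ?_) (hc1 e.op)
    intro x hx h
    rw [beq_iff_eq] at h
    subst h
    simp [he]

end Aux

section Core

lemma mem_takeWhile_mono (s : Bool) {T T' : History}
    (heq : Equivalent T T')
    (hp1 : ∀ a b, prec T a b → prec T' a b)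
    (hp2 : ∀ a b, prec T' a b → prec T a b)
    (hc1 : ∀ o, T.countP (fun e => e.isInv && e.op == o) ≤ 1)
    (hc2 : ∀ o, T.countP (fun e => !e.isInv && e.op == o) ≤ 1)
    (hc1' : ∀ o, T'.countP (fun e => e.isInv && e.op == o) ≤ 1)
    (hc2' : ∀ o, T'.countP (fun e => !e.isInv && e.op == o) ≤ 1)
    {e : Event} (he : e ∈ T.takeWhile (fun x => x.isInv == s)) :
    e ∈ T'.takeWhile (fun x => x.isInv == s) := by
  rcases mem_takeWhile_iff_index.1 he with ⟨hKe, n, hn, hall⟩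
  have hes : e.isInv = s := beq_iff_eq.mp hKe
  have heT' : e ∈ T' := mem_of_equiv heq (List.mem_of_getElem? hn)
  rcases List.mem_iff_getElem?.1 heT' with ⟨n', hn'⟩
  refine mem_takeWhile_iff_index.2 ⟨hKe, n', hn', ?_⟩
  intro m x hm hx
  by_contra hKx
  have hxs : x.isInv = !s := by
    cases hxi : x.isInv <;> cases s <;> simp_all
  cases s with
  | true =>
    have hex : e = Event.inv e.proc e.op := event_eq_inv e hes
    have hxx : x = Event.res x.proc x.op := event_eq_res x (by simpa using hxs)
    have hpx : prec T' x.op e.op := by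
      refine ⟨m, n', x.proc, e.proc, hm, ?_, ?_⟩
      · rw [← hxx]; exact hx
      · rw [← hex]; exact hn'
    rcases hp2 _ _ hpx with ⟨i, j, p, q, hij, hi, hj⟩
    obtain ⟨hjn, -⟩ := index_unique (hc1 e.op) hj hn
      (by simp [Event.isInv, Event.op]) (by rw [hex]; simp [Event.isInv, Event.op])
    have hcon := hall i (Event.res p x.op) (by omega) hi
    simp [Event.isInv] at hcon
  | false =>
    have hex : e = Event.res e.proc e.op := event_eq_res e (by simpa using hes)
    have hxx : x = Event.inv x.proc x.op := event_eq_inv x (by simpa using hxs)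
    have hxT : x ∈ T := mem_of_equiv (fun p => (heq p).symm) (List.mem_of_getElem? hx)
    rcases List.mem_iff_getElem?.1 hxT with ⟨mT, hmT⟩
    have h1 : ¬ mT < n := by
      intro h
      have := hall mT x h hmT
      rw [hxx] at this
      simp [Event.isInv] at this
    have h2 : mT ≠ n := by
      intro h
      rw [h, hn] at hmT
      have := Option.some.inj hmT
      rw [hex, hxx] at this
      simp at this
    have hpx : prec T e.op x.op := by
      refine ⟨n, mT, e.proc, x.proc, by omega, ?_, ?_⟩
      · rw [← hex]; exact hn
      · rw [← hxx]; exact hmT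
    rcases hp1 _ _ hpx with ⟨i, j, p, q, hij, hi, hj⟩
    obtain ⟨hin, -⟩ := index_unique (hc2' e.op) hi hn'
      (by simp [Event.isInv, Event.op]) (by rw [hex]; simp [Event.isInv, Event.op])
    obtain ⟨hjm, -⟩ := index_unique (hc1' x.op) hj hx
      (by simp [Event.isInv, Event.op]) (by rw [hxx]; simp [Event.isInv, Event.op])
    omega

lemma takeWhile_perm (s : Bool) {T T' : History}
    (heq : Equivalent T T')
    (hprec : ∀ a b, prec T a b ↔ prec T' a b)
    (hc1 : ∀ o, T.countP (fun e => e.isInv && e.op == o) ≤ 1)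
    (hc2 : ∀ o, T.countP (fun e => !e.isInv && e.op == o) ≤ 1) :
    (T.takeWhile (fun x => x.isInv == s)).Perm (T'.takeWhile (fun x => x.isInv == s)) := by
  have hperm := equiv_perm heq
  have hc1' : ∀ o, T'.countP (fun e => e.isInv && e.op == o) ≤ 1 := fun o => by
    rw [← hperm.countP_eq]; exact hc1 o
  have hc2' : ∀ o, T'.countP (fun e => !e.isInv && e.op == o) ≤ 1 := fun o => by
    rw [← hperm.countP_eq]; exact hc2 o
  have mono1 : ∀ e, e ∈ T.takeWhile (fun x => x.isInv == s) →
      e ∈ T'.takeWhile (fun x => x.isInv == s) := fun e he =>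
    mem_takeWhile_mono s heq (fun a b => (hprec a b).1) (fun a b => (hprec a b).2)
      hc1 hc2 hc1' hc2' he
  have mono2 : ∀ e, e ∈ T'.takeWhile (fun x => x.isInv == s) →
      e ∈ T.takeWhile (fun x => x.isInv == s) := fun e he =>
    mem_takeWhile_mono s (fun p => (heq p).symm) (fun a b => (hprec a b).2)
      (fun a b => (hprec a b).1) hc1' hc2' hc1 hc2 he
  rw [List.perm_iff_count]
  intro e
  have l1 : List.count e (T.takeWhile (fun x => x.isInv == s)) ≤ 1 :=
    le_trans ((List.takeWhile_sublist _).count_le _) (count_event_le hc1 hc2 e)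
  have l2 : List.count e (T'.takeWhile (fun x => x.isInv == s)) ≤ 1 :=
    le_trans ((List.takeWhile_sublist _).count_le _) (count_event_le hc1' hc2' e)
  by_cases hm : e ∈ T.takeWhile (fun x => x.isInv == s)
  · have hm' := mono1 e hm
    have c1 : 0 < List.count e (T.takeWhile (fun x => x.isInv == s)) :=
      List.count_pos_iff.2 hm
    have c2 : 0 < List.count e (T'.takeWhile (fun x => x.isInv == s)) :=
      List.count_pos_iff.2 hm'
    omega
  · have hm' : e ∉ T'.takeWhile (fun x => x.isInv == s) := fun h => hm (mono2 e h)
    rw [List.count_eq_zero_of_not_mem hm, List.count_eq_zero_of_not_mem hm']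

lemma prec_suffix {T b T2 : History} (hT : T = b ++ T2) {a o : ℕ}
    (hc1 : ∀ o', T.countP (fun e => e.isInv && e.op == o') ≤ 1)
    (hc2 : ∀ o', T.countP (fun e => !e.isInv && e.op == o') ≤ 1) :
    prec T2 a o ↔ (prec T a o ∧ (∃ q, Event.res q a ∈ T2) ∧ ∃ p, Event.inv p o ∈ T2) := by
  subst hT
  constructor
  · rintro ⟨i, j, p, q, hij, hi, hj⟩
    refine ⟨⟨b.length + i, b.length + j, p, q, by omega, ?_, ?_⟩,
      ⟨p, List.mem_of_getElem? hi⟩, ⟨q, List.mem_of_getElem? hj⟩⟩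
    · rw [List.getElem?_append_right (by omega)]
      simpa using hi
    · rw [List.getElem?_append_right (by omega)]
      simpa using hj
  · rintro ⟨⟨i, j, p, q, hij, hi, hj⟩, ⟨q', hq'⟩, ⟨p', hp'⟩⟩
    rcases List.mem_iff_getElem?.1 hq' with ⟨i2, hi2⟩
    rcases List.mem_iff_getElem?.1 hp' with ⟨j2, hj2⟩
    have e1 : (b ++ T2)[b.length + i2]? = T2[i2]? := by
      rw [List.getElem?_append_right (by omega)]; simp
    have e2 : (b ++ T2)[b.length + j2]? = T2[j2]? := by
      rw [List.getElem?_append_right (by omega)]; simp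
    obtain ⟨hie, -⟩ := index_unique (hc2 a) hi (e1.trans hi2)
      (by simp [Event.isInv, Event.op]) (by simp [Event.isInv, Event.op])
    obtain ⟨hje, -⟩ := index_unique (hc1 o) hj (e2.trans hj2)
      (by simp [Event.isInv, Event.op]) (by simp [Event.isInv, Event.op])
    refine ⟨i2, j2, p, q, by omega, ?_, ?_⟩
    · rw [← e1, ← hie]; exact hi
    · rw [← e2, ← hje]; exact hj

end Core

section Blocks

lemma perm_eq_of_len_le_one {l1 l2 : History} (h : l1.Perm l2) (h1 : l1.length ≤ 1) :
    l1 = l2 := by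
  cases l1 with
  | nil => exact (h.symm.eq_nil).symm
  | cons a t =>
    cases t with
    | nil => exact (List.perm_singleton.mp h.symm).symm
    | cons b t' => simp at h1

lemma proj_block_len_le_one {b rest : History} {p : ℕ} {s : Bool}
    (hchain : List.Chain' (fun x y : Event => x.isInv ≠ y.isInv) (proj (b ++ rest) p))
    (hb : ∀ e ∈ b, e.isInv = s) : (proj b p).length ≤ 1 := by
  rw [proj_append] at hchain
  have h1 : List.Chain' (fun x y : Event => x.isInv ≠ y.isInv) (proj b p) :=
    (List.isChain_append.1 hchain).1
  rcases hm : proj b p with - | ⟨x, - | ⟨y, l⟩⟩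
  · simp
  · simp
  · exfalso
    have hx : x ∈ b := (List.mem_filter.1 (by rw [hm]; exact List.mem_cons_self : x ∈ proj b p)).1
    have hy : y ∈ b := (List.mem_filter.1
      (by rw [hm]; exact List.mem_cons_of_mem _ (List.mem_cons_self) : y ∈ proj b p)).1
    rw [hm] at h1
    have hxy := (List.isChain_cons_cons.1 h1).1
    rw [hb x hx, hb y hy] at hxy
    exact hxy rfl

lemma alt_chain' {l : History} (h : Alt l) :
    List.Chain' (fun x y : Event => x.isInv ≠ y.isInv) l := by
  induction h with
  | nil => exact List.isChain_nil
  | pend p o => exact List.isChain_singleton _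
  | step p o l hl ih =>
    have hhead : ∀ x, l.head? = some x → x.isInv = true := by
      intro x hx
      cases hl with
      | nil => simp at hx
      | pend p' o' =>
        simp at hx
        rw [← hx]
        rfl
      | step p' o' l' _ =>
        simp at hx
        rw [← hx]
        rfl
    change List.IsChain _ _; rw [List.isChain_cons_cons]
    refine ⟨by simp [Event.isInv], ?_⟩
    cases l with
    | nil => simp
    | cons x t =>
      rw [List.isChain_cons_cons]
      refine ⟨?_, ih⟩
      have hx := hhead x rfl
      rw [hx]
      simp [Event.isInv]

lemma takeWhile_block {K : Event → Bool} {b t : History} (hb : ∀ e ∈ b, K e = true)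
    (ht : ∀ x, t.head? = some x → K x = false) : (b ++ t).takeWhile K = b := by
  induction b with
  | nil =>
    simp only [List.nil_append]
    cases t with
    | nil => rfl
    | cons x xs =>
      have := ht x rfl
      rw [List.takeWhile_cons_of_neg (by simp [this])]
  | cons e b' ihb =>
    rw [List.cons_append, List.takeWhile_cons_of_pos (hb e (List.mem_cons_self))]
    rw [ihb (fun e' he' => hb e' (List.mem_cons_of_mem _ he'))]

def BlocksP (s : Bool) (bs : List History) : Prop :=
  (∀ b ∈ bs, b ≠ []) ∧ ∀ k, k < bs.length → ∀ e ∈ bs.getD k [], e.isInv = ((k % 2 == 0) == s)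

lemma parity_succ (k : ℕ) : (((k + 1) % 2 == 0) : Bool) = !((k % 2 == 0) : Bool) := by
  rcases Nat.mod_two_eq_zero_or_one k with h | h <;> simp [Nat.add_mod, h]

lemma bnot_beq (x s : Bool) : ((!x) == s) = (x == !s) := by
  cases x <;> cases s <;> rfl

lemma blocksP_cons {s : Bool} {b : History} {rest : List History} :
    BlocksP s (b :: rest) ↔ (b ≠ [] ∧ (∀ e ∈ b, e.isInv = s) ∧ BlocksP (!s) rest) := by
  constructor
  · rintro ⟨h1, h2⟩
    refine ⟨h1 b (List.mem_cons_self), ?_, ?_, ?_⟩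
    · intro e he
      have := h2 0 (by simp) e (by simpa using he)
      simpa using this
    · exact fun b' hb' => h1 b' (List.mem_cons_of_mem _ hb')
    · intro k hk e he
      have := h2 (k + 1) (by simpa using Nat.succ_lt_succ hk) e (by simpa using he)
      rw [this, parity_succ, bnot_beq]
  · rintro ⟨h1, h2, h3, h4⟩
    constructor
    · intro b' hb'
      rcases List.mem_cons.1 hb' with rfl | hb''
      · exact h1
      · exact h3 b' hb''
    · intro k hk e he
      cases k with
      | zero =>
        simp only [List.getD_cons_zero] at he
        simpa using h2 e he
      | succ k' =>
        simp only [List.getD_cons_succ] at he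
        have := h4 k' (by simpa using Nat.lt_of_succ_lt_succ hk) e he
        rw [this, parity_succ, bnot_beq]

end Blocks

lemma main_lemma : ∀ (bs : List History) (s : Bool) (T T' : History),
    T = bs.flatten →
    BlocksP s bs →
    Equivalent T T' →
    (∀ a b, prec T a b ↔ prec T' a b) →
    (∀ o, T.countP (fun e => e.isInv && e.op == o) ≤ 1) →
    (∀ o, T.countP (fun e => !e.isInv && e.op == o) ≤ 1) →
    (∀ p, List.Chain' (fun x y : Event => x.isInv ≠ y.isInv) (proj T p)) →
    ∃ bs' : List History, T' = bs'.flatten ∧ bs'.length = bs.length ∧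
      BlocksP s bs' ∧ ∀ k, (bs'.getD k []).Perm (bs.getD k []) := by
  intro bs
  induction bs with
  | nil =>
    intro s T T' hT hbs heq hprec hc1 hc2 hch
    subst hT
    have hT' : T' = [] := by
      rw [List.eq_nil_iff_forall_not_mem]
      intro e he
      have := mem_of_equiv (fun p => (heq p).symm) he
      simp at this
    refine ⟨[], by simp [hT'], rfl, ⟨by simp, by simp⟩, fun k => by simp⟩
  | cons b rest ih =>
    intro s T T' hT hbs heq hprec hc1 hc2 hch
    rcases blocksP_cons.1 hbs with ⟨hbne, hbs0, hbrest⟩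
    have hTb : T = b ++ rest.flatten := by simpa using hT
    -- `b` is the maximal kind-`s` prefix of `T`
    have ht : ∀ x, (rest.flatten).head? = some x → (x.isInv == s) = false := by
      intro x hx
      cases rest with
      | nil => simp at hx
      | cons b2 rest2 =>
        rcases blocksP_cons.1 hbrest with ⟨hb2ne, hb2s, -⟩
        cases b2 with
        | nil => exact absurd rfl hb2ne
        | cons y ys =>
          have hxy : x = y := by
            simp [List.flatten_cons] at hx
            exact hx.symm
          have hys : y.isInv = !s := hb2s y (List.mem_cons_self)
          rw [hxy, hys]
          cases s <;> rfl
    have htw : T.takeWhile (fun x => x.isInv == s) = b := by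
      rw [hTb]
      exact takeWhile_block (fun e he => by rw [hbs0 e he]; simp) ht
    have hT'split : T' = T'.takeWhile (fun x => x.isInv == s) ++
        T'.dropWhile (fun x => x.isInv == s) :=
      (List.takeWhile_append_dropWhile).symm
    have hbb' : b.Perm (T'.takeWhile (fun x => x.isInv == s)) := by
      have h0 := takeWhile_perm s heq hprec hc1 hc2
      rw [htw] at h0
      exact h0
    have hpermTT' := equiv_perm heq
    have hc1' : ∀ o, T'.countP (fun e => e.isInv && e.op == o) ≤ 1 := fun o => by
      rw [← hpermTT'.countP_eq]; exact hc1 o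
    have hc2' : ∀ o, T'.countP (fun e => !e.isInv && e.op == o) ≤ 1 := fun o => by
      rw [← hpermTT'.countP_eq]; exact hc2 o
    -- projections of the first blocks agree
    have hproj : ∀ p, proj b p = proj (T'.takeWhile (fun x => x.isInv == s)) p := by
      intro p
      have h1 : (proj b p).length ≤ 1 :=
        proj_block_len_le_one (by rw [← hTb]; exact hch p) hbs0
      exact perm_eq_of_len_le_one (hbb'.filter _) h1
    have heq2 : Equivalent rest.flatten (T'.dropWhile (fun x => x.isInv == s)) := by
      intro p
      have h0 : proj b p ++ proj rest.flatten p =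
          proj (T'.takeWhile (fun x => x.isInv == s)) p ++
          proj (T'.dropWhile (fun x => x.isInv == s)) p := by
        rw [← proj_append, ← proj_append, ← hTb, ← hT'split]
        exact heq p
      rw [hproj p] at h0
      exact List.append_cancel_left h0
    have hsub2 : rest.flatten.Sublist T := by
      rw [hTb]; exact List.sublist_append_right _ _
    have hc1_2 : ∀ o, rest.flatten.countP (fun e => e.isInv && e.op == o) ≤ 1 :=
      fun o => le_trans (hsub2.countP_le) (hc1 o)
    have hc2_2 : ∀ o, rest.flatten.countP (fun e => !e.isInv && e.op == o) ≤ 1 :=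
      fun o => le_trans (hsub2.countP_le) (hc2 o)
    have hch2 : ∀ p, List.Chain' (fun x y : Event => x.isInv ≠ y.isInv) (proj rest.flatten p) := by
      intro p
      have h0 := hch p
      rw [hTb, proj_append] at h0
      exact (List.isChain_append.1 h0).2.1
    have hprec2 : ∀ a o, prec rest.flatten a o ↔
        prec (T'.dropWhile (fun x => x.isInv == s)) a o := by
      intro a o
      rw [prec_suffix hTb hc1 hc2, prec_suffix hT'split hc1' hc2']
      constructor
      · rintro ⟨hp, ⟨q, hq⟩, ⟨p, hp2⟩⟩
        exact ⟨(hprec _ _).1 hp, ⟨q, mem_of_equiv heq2 hq⟩, ⟨p, mem_of_equiv heq2 hp2⟩⟩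
      · rintro ⟨hp, ⟨q, hq⟩, ⟨p, hp2⟩⟩
        exact ⟨(hprec _ _).2 hp, ⟨q, mem_of_equiv (fun p' => (heq2 p').symm) hq⟩,
          ⟨p, mem_of_equiv (fun p' => (heq2 p').symm) hp2⟩⟩
    rcases ih (!s) rest.flatten (T'.dropWhile (fun x => x.isInv == s)) rfl hbrest heq2
      hprec2 hc1_2 hc2_2 hch2 with ⟨bs', h1, h2, h3, h4⟩
    refine ⟨T'.takeWhile (fun x => x.isInv == s) :: bs', ?_, ?_, ?_, ?_⟩
    · rw [List.flatten_cons, ← h1]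
      exact hT'split
    · simpa using h2
    · refine blocksP_cons.2 ⟨?_, ?_, h3⟩
      · intro h
        apply hbne
        have hlen := hbb'.length_eq
        rw [h] at hlen
        exact List.eq_nil_of_length_eq_zero hlen
      · exact fun e he => beq_iff_eq.mp (List.mem_takeWhile_imp (p := fun x : Event => x.isInv == s) he)
    · intro k
      cases k with
      | zero => simpa using hbb'.symm
      | succ k' => simpa using h4 k'

/-- If `H'` is equivalent to `H` with `≺_{H'} = ≺_H`, and
`H = I₁ R₁ I₂ R₂ ...` is the maximal alternating block decomposition, then
`H' = I'₁ R'₁ I'₂ R'₂ ...` where each `I'ₓ` (resp. `R'ₓ`) is a permutation of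
`Iₓ` (resp. `Rₓ`). -/
theorem block_decomposition_permutation (H H' : History) (bs : List History)
    (hwf : WellFormed H) (hwf' : WellFormed H')
    (heq : Equivalent H H') (hprec : ∀ a b, prec H a b ↔ prec H' a b)
    (hbs : AltBlocks bs) (hjoin : H = bs.flatten) :
    ∃ bs' : List History, H' = bs'.flatten ∧ bs'.length = bs.length ∧
      AltBlocks bs' ∧ ∀ k, (bs'.getD k []).Perm (bs.getD k []) := by
  have hbsP : BlocksP true bs := by
    rcases hbs with ⟨h1, h2⟩
    refine ⟨h1, fun k hk e he => ?_⟩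
    rw [h2 k hk e he]
    simp
  have hch : ∀ p, List.Chain' (fun x y : Event => x.isInv ≠ y.isInv) (proj H p) :=
    fun p => alt_chain' (hwf.1 p)
  rcases main_lemma bs true H H' hjoin hbsP heq hprec hwf.2.1 hwf.2.2 hch with
    ⟨bs', h1, h2, h3, h4⟩
  refine ⟨bs', h1, h2, ?_, h4⟩
  rcases h3 with ⟨g1, g2⟩
  refine ⟨g1, fun k hk e he => ?_⟩
  rw [g2 k hk e he]
  simp

end RV
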